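/- For every k ≥ 3 and n ≥ 1, every perfect k-hash code C of length n satisfies #C ≤ (k−1) · (k/(k−1))^n, equivalently (k−1)^{n−1} · #C ≤ k^n. -/

import Mathlib

/-- A code `C ⊆ {0,…,k-1}ⁿ` is a perfect `k`-hash code if for any `k` pairwise
distinct codewords there exists a coordinate in which they are pairwise distinct. -/
def PerfectHash {k n : ℕ} (C : Set (Fin n → Fin k)) : Prop :=
  ∀ f : Fin k → (Fin n → Fin k), (∀ a, f a ∈ C) → Function.Injective f →
    ∃ i : Fin n, Function.Injective fun a => f a i

section Aux

variable {k L : ℕ}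

lemma ph_eq_of_head_tail {u v : Fin (L + 1) → Fin k} (h0 : u 0 = v 0)
    (ht : Fin.tail u = Fin.tail v) : u = v := by
  funext i
  induction i using Fin.cases with
  | zero => exact h0
  | succ j => exact congrFun ht j

lemma ph_card3 {α : Type*} [DecidableEq α] (a b c : α) :
    ({a, b, c} : Finset α).card ≤ 3 := by
  refine (Finset.card_insert_le _ _).trans (Nat.add_le_add_right ?_ 1)
  refine (Finset.card_insert_le _ _).trans (Nat.add_le_add_right ?_ 1)
  simp

lemma ph_card4 {α : Type*} [DecidableEq α] (a b c d : α) :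
    ({a, b, c, d} : Finset α).card ≤ 4 := by
  refine (Finset.card_insert_le _ _).trans (Nat.add_le_add_right ?_ 1)
  exact ph_card3 b c d

lemma ph_sep {C : Set (Fin L → Fin k)} (hC : PerfectHash C)
    (S : Finset (Fin L → Fin k)) (hS : ↑S ⊆ C) (hcard : S.card ≤ k) (hN : k ≤ C.ncard) :
    ∃ (f : Fin k → (Fin L → Fin k)) (i : Fin L), (∀ a, f a ∈ C) ∧ Function.Injective f ∧
      (↑S ⊆ Set.range f) ∧ Function.Injective (fun a => f a i) := by
  classical
  have hfin : C.Finite := Set.toFinite C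
  have hSsub : S ⊆ hfin.toFinset := fun x hx => hfin.mem_toFinset.2 (hS hx)
  have hk2 : k ≤ hfin.toFinset.card := by
    rwa [Set.ncard_eq_toFinset_card C hfin] at hN
  obtain ⟨T, hST, hTC, hTcard⟩ := Finset.exists_subsuperset_card_eq hSsub hcard hk2
  have hTc : Fintype.card T = k := by rw [Fintype.card_coe]; exact hTcard
  let e := Fintype.equivFinOfCardEq hTc
  set f : Fin k → (Fin L → Fin k) := fun a => ((e.symm a : T) : Fin L → Fin k) with hf
  have hmem : ∀ a, f a ∈ C := fun a => hfin.mem_toFinset.1 (hTC (e.symm a).2)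
  have hinj : Function.Injective f := fun a b hab => by
    have : (e.symm a : T) = e.symm b := Subtype.ext hab
    exact e.symm.injective this
  have hrange : ↑S ⊆ Set.range f := by
    intro x hx
    refine ⟨e ⟨x, hST hx⟩, ?_⟩
    simp [hf]
  obtain ⟨i, hi⟩ := hC f hmem hinj
  exact ⟨f, i, hmem, hinj, hrange, hi⟩

lemma ph_sep_at_zero {f : Fin k → (Fin (L + 1) → Fin k)} {i : Fin (L + 1)}
    (hi : Function.Injective fun a => f a i)
    {u v : Fin (L + 1) → Fin k} (hu : u ∈ Set.range f) (hv : v ∈ Set.range f)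
    (huv : u ≠ v) (ht : Fin.tail u = Fin.tail v) : i = 0 := by
  by_contra h0
  obtain ⟨a, ha⟩ := hu
  obtain ⟨b, hb⟩ := hv
  have hab : a ≠ b := by
    intro h; apply huv; rw [← ha, ← hb, h]
  have huvi : u i = v i := by
    have h1 := congrFun ht (i.pred h0)
    simp only [Fin.tail] at h1
    rwa [Fin.succ_pred] at h1
  exact hab (hi (show f a i = f b i by rw [ha, hb, huvi]))

lemma ph_twin_injOn_zero {C : Set (Fin (L + 1) → Fin k)} (hC : PerfectHash C)
    (hN : k ≤ C.ncard) (S : Finset (Fin (L + 1) → Fin k)) (hS : ↑S ⊆ C) (hcard : S.card ≤ k)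
    {u v : Fin (L + 1) → Fin k} (hu : u ∈ S) (hv : v ∈ S) (huv : u ≠ v)
    (ht : Fin.tail u = Fin.tail v) :
    Set.InjOn (fun c => c 0) (S : Set (Fin (L + 1) → Fin k)) := by
  obtain ⟨f, i, hmem, hinj, hrange, hi⟩ := ph_sep hC S hS hcard hN
  have hi0 : i = 0 := ph_sep_at_zero hi (hrange hu) (hrange hv) huv ht
  subst hi0
  intro x hx y hy hxy
  obtain ⟨a, ha⟩ := hrange hx
  obtain ⟨b, hb⟩ := hrange hy
  have hab : a = b := hi (show f a 0 = f b 0 by rw [ha, hb]; exact hxy)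
  rw [← ha, ← hb, hab]

/-- head constraint from a twin pair -/
lemma ph_twin_head {C : Set (Fin (L + 1) → Fin k)} (hC : PerfectHash C)
    (hN : k ≤ C.ncard) {u v x : Fin (L + 1) → Fin k}
    (hu : u ∈ C) (hv : v ∈ C) (hx : x ∈ C) (huv : u ≠ v)
    (ht : Fin.tail u = Fin.tail v) (hk : 3 ≤ k) (hxu : x ≠ u) (hxv : x ≠ v) :
    x 0 ≠ u 0 ∧ x 0 ≠ v 0 := by
  classical
  have hS : (↑({u, v, x} : Finset (Fin (L + 1) → Fin k)) : Set (Fin (L + 1) → Fin k)) ⊆ C := by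
    intro z hz
    simp only [Finset.coe_insert, Finset.coe_singleton, Set.mem_insert_iff,
      Set.mem_singleton_iff] at hz
    rcases hz with rfl | rfl | rfl <;> assumption
  have hinj := ph_twin_injOn_zero hC hN {u, v, x} hS ((ph_card3 u v x).trans hk)
    (by simp) (by simp) huv ht
  constructor
  · intro h
    exact hxu (hinj (by simp) (by simp) h)
  · intro h
    exact hxv (hinj (by simp) (by simp) h)

end Aux
section Main

variable {k : ℕ}

lemma fin3_four : ∀ a b c d : Fin 3, b = a ∨ c = a ∨ c = b ∨ d = a ∨ d = b ∨ d = c := by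
  decide

lemma fin3_eq : ∀ a b c d : Fin 3, a = b ∨ c = a ∨ c = b ∨ d = a ∨ d = b ∨ c = d := by
  decide

lemma ph_aux (hk : 3 ≤ k) :
    ∀ m (C : Set (Fin (m + 1) → Fin k)), PerfectHash C →
      (k - 1) ^ m * C.ncard ≤ k ^ (m + 1) := by
  intro m
  induction m with
  | zero =>
    intro C _
    have h1 : C.ncard ≤ (Set.univ : Set (Fin 1 → Fin k)).ncard :=
      Set.ncard_le_ncard (Set.subset_univ C) (Set.toFinite _)
    have h2 : (Set.univ : Set (Fin 1 → Fin k)).ncard = k := by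
      rw [Set.ncard_univ, Nat.card_eq_fintype_card]
      simp
    have h3 := h1.trans (le_of_eq h2)
    simpa using h3
  | succ m IH =>
    intro C hC
    by_cases hsmall : C.ncard ≤ k
    · calc (k - 1) ^ (m + 1) * C.ncard ≤ k ^ (m + 1) * k :=
            Nat.mul_le_mul (Nat.pow_le_pow_left (by omega) _) hsmall
        _ = k ^ (m + 2) := by ring
    push_neg at hsmall
    have hN : k ≤ C.ncard := le_of_lt hsmall
    by_cases htwin : ∃ u ∈ C, ∃ v ∈ C, u ≠ v ∧ Fin.tail u = Fin.tail v
    · -- Case B : a twin pair exists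
      obtain ⟨u, hu, v, hv, huv, ht⟩ := htwin
      have hne0 : u 0 ≠ v 0 := fun h => huv (ph_eq_of_head_tail h ht)
      rcases Nat.lt_or_ge k 4 with hk4 | hk4
      · -- k = 3
        have hk3 : k = 3 := by omega
        subst hk3
        have hhead : ∀ x ∈ C, x ≠ u → x ≠ v → x 0 ≠ u 0 ∧ x 0 ≠ v 0 := fun x hx hxu hxv =>
          ph_twin_head hC hN hu hv hx huv ht (by norm_num) hxu hxv
        -- tail is injective on C \ {v}
        have hmain : ∀ y : Fin (m + 2) → Fin 3, y ∈ C → y ≠ u → y ≠ v →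
            Fin.tail u = Fin.tail y → False := by
          intro y hyC hyu hyv htuy
          have hy0 : y 0 ≠ u 0 ∧ y 0 ≠ v 0 := hhead y hyC hyu hyv
          have hzex : (C \ {u, v, y}).Nonempty := by
            rw [Set.nonempty_iff_ne_empty]
            intro hemp
            have hsub : C ⊆ {u, v, y} := by
              intro z hz
              by_contra hzn
              exact (Set.eq_empty_iff_forall_notMem.1 hemp z) ⟨hz, hzn⟩
            have h4 := Set.ncard_le_ncard hsub (Set.toFinite _)
            have h3 : ({u, v, y} : Set (Fin (m + 2) → Fin 3)).ncard ≤ 3 :=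
              (Set.ncard_insert_le _ _).trans (Nat.add_le_add_right
                ((Set.ncard_insert_le _ _).trans (by simp [Set.ncard_singleton])) 1)
            omega
          obtain ⟨z, hzC, hzn⟩ := hzex
          simp only [Set.mem_insert_iff, Set.mem_singleton_iff, not_or] at hzn
          obtain ⟨hzu, hzv, hzy⟩ := hzn
          have h1 := hhead z hzC hzu hzv
          have h2 := ph_twin_head hC hN hu hyC hzC (fun h => hyu h.symm) htuy
            (by norm_num) hzu hzy
          rcases fin3_four (u 0) (v 0) (y 0) (z 0) with h | h | h | h | h | h
          · exact hne0 h.symm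
          · exact hy0.1 h
          · exact hy0.2 h
          · exact h2.1 h
          · exact h1.2 h
          · exact h2.2 h
        have htinj : Set.InjOn Fin.tail (C \ {v}) := by
          intro x hx y hy htxy
          by_contra hxy
          obtain ⟨hxC, hxv⟩ := hx
          obtain ⟨hyC, hyv⟩ := hy
          simp only [Set.mem_singleton_iff] at hxv hyv
          by_cases hxu : x = u
          · exact hmain y hyC (fun h => hxy (hxu.trans h.symm)) hyv (hxu ▸ htxy)
          by_cases hyu : y = u
          · exact hmain x hxC (fun h => hxy (h.trans hyu.symm)) hxv (hyu ▸ htxy.symm)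
          have h1 := hhead x hxC hxu hxv
          have h2 := hhead y hyC hyu hyv
          have hx0y0 : x 0 = y 0 := by
            rcases fin3_eq (u 0) (v 0) (x 0) (y 0) with h | h | h | h | h | h
            · exact absurd h hne0
            · exact absurd h h1.1
            · exact absurd h h1.2
            · exact absurd h h2.1
            · exact absurd h h2.2
            · exact h
          exact hxy (ph_eq_of_head_tail hx0y0 htxy)
        set D : Set (Fin (m + 1) → Fin 3) := Fin.tail '' (C \ {v}) with hD
        have hDcard : D.ncard = C.ncard - 1 := by
          rw [hD, Set.ncard_image_of_injOn htinj,
            Set.ncard_diff_singleton_of_mem hv]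
        have hDph : PerfectHash D := by
          intro g hg hginj
          have hch : ∀ a, ∃ c, (c ∈ C \ {v}) ∧ Fin.tail c = g a := by
            intro a
            obtain ⟨c, hc1, hc2⟩ := hg a
            exact ⟨c, hc1, hc2⟩
          choose c hc1 hc2 using hch
          have hcinj : Function.Injective c := fun a b h => by
            apply hginj; rw [← hc2 a, ← hc2 b, h]
          obtain ⟨i, hi⟩ := hC c (fun a => (hc1 a).1) hcinj
          rcases eq_or_ne i 0 with rfl | hi0
          · exfalso
            have hsurj : Function.Surjective (fun a => c a 0) :=
              Finite.injective_iff_surjective.mp hi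
            obtain ⟨a, ha⟩ := hsurj (v 0)
            have hcav : c a ≠ v := by
              have := (hc1 a).2; simpa using this
            by_cases hcau : c a = u
            · exact hne0 (by rw [← hcau]; exact ha)
            · exact (hhead (c a) (hc1 a).1 hcau hcav).2 ha
          · refine ⟨i.pred hi0, ?_⟩
            intro a b hab
            apply hi
            show c a i = c b i
            have h3 : Fin.tail (c a) (i.pred hi0) = Fin.tail (c b) (i.pred hi0) := by
              rw [hc2 a, hc2 b]; exact hab
            simp only [Fin.tail] at h3
            rwa [Fin.succ_pred] at h3
        have hIH := IH D hDph
        obtain ⟨N', hN'⟩ : ∃ N', C.ncard = N' + 1 := ⟨C.ncard - 1, by omega⟩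
        rw [hDcard, hN', Nat.add_sub_cancel] at hIH
        rw [hN']
        have e2 : (3 - 1 : ℕ) ^ (m + 1) ≤ 3 ^ (m + 1) := Nat.pow_le_pow_left (by norm_num) _
        calc (3 - 1 : ℕ) ^ (m + 1) * (N' + 1)
            = 2 * ((3 - 1 : ℕ) ^ m * N') + (3 - 1 : ℕ) ^ (m + 1) := by norm_num; ring
          _ ≤ 2 * 3 ^ (m + 1) + 3 ^ (m + 1) := Nat.add_le_add (Nat.mul_le_mul_left 2 hIH) e2
          _ = 3 ^ (m + 2) := by ring
      · -- k ≥ 4 : contradiction with C.ncard > k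
        exfalso
        classical
        have key : ∀ x ∈ C, ∀ y ∈ C,
            Set.InjOn (fun c => c 0) ({u, v, x, y} : Set (Fin (m + 2) → Fin k)) := by
          intro x hx y hy
          have hS : (↑({u, v, x, y} : Finset (Fin (m + 2) → Fin k)) :
              Set (Fin (m + 2) → Fin k)) ⊆ C := by
            intro z hz
            simp only [Finset.coe_insert, Finset.coe_singleton, Set.mem_insert_iff,
              Set.mem_singleton_iff] at hz
            rcases hz with rfl | rfl | rfl | rfl <;> assumption
          have := ph_twin_injOn_zero hC hN {u, v, x, y} hS ((ph_card4 u v x y).trans hk4)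
            (by simp) (by simp) huv ht
          simpa using this
        have hmap : ∀ x ∈ C \ {u, v}, x 0 ∈ ({u 0, v 0}ᶜ : Set (Fin k)) := by
          intro x hx
          obtain ⟨hxC, hxn⟩ := hx
          simp only [Set.mem_insert_iff, Set.mem_singleton_iff, not_or] at hxn
          simp only [Set.mem_compl_iff, Set.mem_insert_iff, Set.mem_singleton_iff, not_or]
          have hk2 := key x hxC x hxC
          constructor
          · intro h; exact hxn.1 (hk2 (by simp) (by simp) h)
          · intro h; exact hxn.2 (hk2 (by simp) (by simp) h)
        have hinj : Set.InjOn (fun c => c 0) (C \ {u, v}) := by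
          intro x hx y hy hxy
          exact key x hx.1 y hy.1 (by simp) (by simp) hxy
        have hle := Set.ncard_le_ncard_of_injOn (fun c : Fin (m + 2) → Fin k => c 0) hmap hinj (Set.toFinite _)
        have h1 : (C \ {u, v}).ncard = C.ncard - 2 := by
          rw [Set.ncard_diff (by
            intro z hz
            simp only [Set.mem_insert_iff, Set.mem_singleton_iff] at hz
            rcases hz with rfl | rfl <;> assumption) (Set.toFinite _), Set.ncard_pair huv]
        have h2 : ({u 0, v 0}ᶜ : Set (Fin k)).ncard = k - 2 := by
          have h3 := Set.ncard_add_ncard_compl ({u 0, v 0} : Set (Fin k))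
            (Set.toFinite _) (Set.toFinite _)
          rw [Set.ncard_pair hne0, Nat.card_eq_fintype_card, Fintype.card_fin] at h3
          omega
        omega
    · -- Case A : no twin pair, tail is injective on C
      classical
      have htinj : Set.InjOn Fin.tail C := by
        intro x hx y hy hxy
        by_contra hne
        exact htwin ⟨x, hx, y, hy, hne, hxy⟩
      set F := (Set.toFinite C).toFinset with hF
      have hFcard : F.card = C.ncard := (Set.ncard_eq_toFinset_card C _).symm
      obtain ⟨a₀, -, hmin⟩ := Finset.exists_min_image Finset.univ
        (fun a : Fin k => (F.filter (fun c => c 0 = a)).card) ⟨⟨0, by omega⟩, Finset.mem_univ _⟩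
      have hsum : F.card = ∑ a : Fin k, (F.filter (fun c => c 0 = a)).card :=
        Finset.card_eq_sum_card_fiberwise (fun x _ => Finset.mem_univ _)
      have hnsmul := Finset.card_nsmul_le_sum Finset.univ
        (fun a => (F.filter (fun c => c 0 = a)).card)
        ((F.filter (fun c => c 0 = a₀)).card) (fun a _ => hmin a (Finset.mem_univ a))
      rw [Finset.card_univ, Fintype.card_fin, smul_eq_mul] at hnsmul
      set s : ℕ := (F.filter (fun c => c 0 = a₀)).card with hs
      have hks : k * s ≤ C.ncard := by
        rw [← hFcard, hsum]; exact hnsmul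
      -- the set-level fiber
      have hfib : ({c | c ∈ C ∧ c 0 = a₀} : Set (Fin (m + 2) → Fin k)).ncard = s := by
        rw [hs]
        have : ({c | c ∈ C ∧ c 0 = a₀} : Set (Fin (m + 2) → Fin k)) =
            ↑(F.filter (fun c => c 0 = a₀)) := by
          ext c
          simp [hF, Set.Finite.mem_toFinset, Set.mem_setOf_eq]
        rw [this, Set.ncard_coe_finset]
      set D : Set (Fin (m + 1) → Fin k) :=
        Fin.tail '' (C \ {c | c ∈ C ∧ c 0 = a₀}) with hD
      have hsub : {c | c ∈ C ∧ c 0 = a₀} ⊆ C := fun c hc => hc.1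
      have hDcard : D.ncard = C.ncard - s := by
        rw [hD, Set.ncard_image_of_injOn (htinj.mono Set.diff_subset),
          Set.ncard_diff hsub (Set.toFinite _), hfib]
      have hDph : PerfectHash D := by
        intro g hg hginj
        have hch : ∀ a, ∃ c, (c ∈ C \ {c | c ∈ C ∧ c 0 = a₀}) ∧ Fin.tail c = g a := by
          intro a
          obtain ⟨c, hc1, hc2⟩ := hg a
          exact ⟨c, hc1, hc2⟩
        choose c hc1 hc2 using hch
        have hcinj : Function.Injective c := fun a b h => by
          apply hginj; rw [← hc2 a, ← hc2 b, h]
        obtain ⟨i, hi⟩ := hC c (fun a => (hc1 a).1) hcinj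
        rcases eq_or_ne i 0 with rfl | hi0
        · exfalso
          have hsurj : Function.Surjective (fun a => c a 0) :=
            Finite.injective_iff_surjective.mp hi
          obtain ⟨a, ha⟩ := hsurj a₀
          exact (hc1 a).2 ⟨(hc1 a).1, ha⟩
        · refine ⟨i.pred hi0, ?_⟩
          intro a b hab
          apply hi
          show c a i = c b i
          have h3 : Fin.tail (c a) (i.pred hi0) = Fin.tail (c b) (i.pred hi0) := by
            rw [hc2 a, hc2 b]; exact hab
          simp only [Fin.tail] at h3
          rwa [Fin.succ_pred] at h3
      have hIH := IH D hDph
      rw [hDcard] at hIH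
      have hsN : s ≤ C.ncard := by
        rw [← hfib]; exact Set.ncard_le_ncard hsub (Set.toFinite _)
      have h1 : (k - 1) * C.ncard ≤ k * (C.ncard - s) := by
        calc (k - 1) * C.ncard = k * C.ncard - C.ncard := by
              rw [Nat.sub_mul, one_mul]
          _ ≤ k * C.ncard - k * s := Nat.sub_le_sub_left hks _
          _ = k * (C.ncard - s) := (Nat.mul_sub_left_distrib k _ _).symm
      calc (k - 1) ^ (m + 1) * C.ncard = (k - 1) ^ m * ((k - 1) * C.ncard) := by ring
        _ ≤ (k - 1) ^ m * (k * (C.ncard - s)) := Nat.mul_le_mul_left _ h1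
        _ = k * ((k - 1) ^ m * (C.ncard - s)) := by ring
        _ ≤ k * k ^ (m + 1) := Nat.mul_le_mul_left _ hIH
        _ = k ^ (m + 2) := by ring

end Main

theorem perfect_hash_simple_bound {k n : ℕ} (hk : 3 ≤ k) (hn : 1 ≤ n)
    (C : Set (Fin n → Fin k)) (hC : PerfectHash C) :
    (k - 1) ^ (n - 1) * C.ncard ≤ k ^ n := by
  obtain ⟨m, rfl⟩ : ∃ m, n = m + 1 := ⟨n - 1, by omega⟩
  simpa using ph_aux hk m C hC
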